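/- If v is uniformly distributed on [0,1], then z = -log(-log(v)/exp(μ) + exp(-z_0)) is distributed according to the Gumbel distribution with location μ truncated at z_0: its CDF is F_μ(min(t, z_0))/F_μ(z_0), where F_μ(t) = exp(-exp(-t+μ)). -/

import Mathlib

open MeasureTheory

/-- Gumbel CDF with location `μ`. -/
noncomputable def gumbelCDF (μ z : ℝ) : ℝ := Real.exp (-Real.exp (-z + μ))

/-- If `v` is uniform on `[0,1]`, then `z = -log(-log(v)/exp μ + exp (-z₀))` has the Gumbel
distribution with location `μ` truncated at `z₀`: its CDF at `t` is
`F_μ(min t z₀) / F_μ(z₀)`. -/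
theorem truncated_gumbel_reparametrization (μ z₀ t : ℝ) :
    (volume.restrict (Set.Icc (0:ℝ) 1))
        {v : ℝ | -Real.log (-(Real.log v) / Real.exp μ + Real.exp (-z₀)) ≤ t}
      = ENNReal.ofReal (gumbelCDF μ (min t z₀) / gumbelCDF μ z₀) := by
  set S := {v : ℝ | -Real.log (-(Real.log v) / Real.exp μ + Real.exp (-z₀)) ≤ t} with hS
  set L : ℝ := Real.exp (μ - z₀) - Real.exp (μ - t) with hLdef
  have e1 : Real.exp (μ - z₀) = Real.exp (-z₀) * Real.exp μ := by
    rw [← Real.exp_add]; ring_nf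
  have e2 : Real.exp (μ - t) = Real.exp (-t) * Real.exp μ := by
    rw [← Real.exp_add]; ring_nf
  -- RHS simplification
  have hRHS : gumbelCDF μ (min t z₀) / gumbelCDF μ z₀ = min (Real.exp L) 1 := by
    unfold gumbelCDF
    rw [← Real.exp_sub]
    rcases le_total t z₀ with h | h
    · have hle : Real.exp (μ - z₀) ≤ Real.exp (μ - t) := by
        apply Real.exp_le_exp.2; linarith
      rw [min_eq_left h, min_eq_left (by
        rw [Real.exp_le_one_iff]; linarith)]
      congr 1; rw [hLdef, show -t + μ = μ - t by ring]; ring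
    · have hle : Real.exp (μ - t) ≤ Real.exp (μ - z₀) := by
        apply Real.exp_le_exp.2; linarith
      rw [min_eq_right h, min_eq_right (by
        rw [Real.one_le_exp_iff]; linarith)]
      simp [sub_eq_zero]
  -- key equivalence on (0,1]
  have key : ∀ v ∈ Set.Ioc (0:ℝ) 1, (v ∈ S ↔ v ≤ Real.exp L) := by
    intro v hv
    have hv0 : (0:ℝ) < v := hv.1
    have hlogv : Real.log v ≤ 0 := Real.log_nonpos hv0.le hv.2
    have hA : 0 < -Real.log v / Real.exp μ + Real.exp (-z₀) :=
      add_pos_of_nonneg_of_pos (div_nonneg (by linarith) (Real.exp_pos μ).le)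
        (Real.exp_pos _)
    have h1 : v ∈ S ↔ Real.exp (-t) ≤ -Real.log v / Real.exp μ + Real.exp (-z₀) := by
      rw [hS, Set.mem_setOf_eq, neg_le, Real.le_log_iff_exp_le hA]
    rw [h1, ← Real.log_le_iff_le_exp hv0, hLdef, e1, e2]
    rw [← sub_le_iff_le_add, div_eq_mul_inv, sub_le_iff_le_add', ← sub_le_iff_le_add]
    constructor
    · intro h
      have := (mul_le_mul_iff_of_pos_right (Real.exp_pos μ)).2 h
      rw [sub_mul, mul_assoc, inv_mul_cancel₀ (Real.exp_pos μ).ne', mul_one] at this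
      linarith
    · intro h
      have h' : Real.exp (-t) * Real.exp μ - Real.exp (-z₀) * Real.exp μ ≤ -Real.log v := by
        linarith
      have := (mul_le_mul_iff_of_pos_right (inv_pos.2 (Real.exp_pos μ))).2 h'
      rw [sub_mul, mul_assoc, mul_inv_cancel₀ (Real.exp_pos μ).ne', mul_one,
        mul_assoc, mul_inv_cancel₀ (Real.exp_pos μ).ne', mul_one] at this
      linarith
  have hSet : S ∩ Set.Ioc (0:ℝ) 1 = Set.Ioc 0 (min (Real.exp L) 1) := by
    ext v
    simp only [Set.mem_inter_iff, Set.mem_Ioc, le_min_iff]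
    constructor
    · rintro ⟨hv, h0, h1⟩
      exact ⟨h0, (key v ⟨h0, h1⟩).1 hv, h1⟩
    · rintro ⟨h0, hL, h1⟩
      exact ⟨(key v ⟨h0, h1⟩).2 hL, h0, h1⟩
  have hmeas : (volume.restrict (Set.Icc (0:ℝ) 1)) S = volume (S ∩ Set.Ioc (0:ℝ) 1) := by
    rw [Measure.restrict_apply' measurableSet_Icc]
    exact measure_congr ((Filter.EventuallyEq.refl _ S).inter Ioc_ae_eq_Icc.symm)
  rw [hmeas, hSet, hRHS, Real.volume_Ioc, sub_zero]
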